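/- In a tree, every longest path is a central path; that is, if P is a longest path of a tree T then ecc_T(P) = pe(T). -/

import Mathlib

open SimpleGraph

variable {V : Type*} [Fintype V] [DecidableEq V]

/-- Distance from a vertex `u` to the vertex set of a walk `P`. -/
noncomputable def walkDist (G : SimpleGraph V) {a b : V} (P : G.Walk a b) (u : V) : ℕ :=
  P.support.toFinset.inf' ⟨a, List.mem_toFinset.mpr P.start_mem_support⟩ (fun x => G.dist u x)

/-- Eccentricity of a walk: max distance from any vertex of `G` to the walk. -/
noncomputable def eccW (G : SimpleGraph V) {a b : V} (P : G.Walk a b) : ℕ :=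
  Finset.univ.sup (walkDist G P)

/-- Path eccentricity of a graph. -/
noncomputable def pe (G : SimpleGraph V) : ℕ :=
  sInf {m | ∃ (a b : V) (P : G.Walk a b), P.IsPath ∧ eccW G P = m}

/-- `P` is a longest path in `G`. -/
def IsLongestPath (G : SimpleGraph V) {a b : V} (P : G.Walk a b) : Prop :=
  P.IsPath ∧ ∀ (c d : V) (Q : G.Walk c d), Q.IsPath → Q.length ≤ P.length

/-- `G` is `k`-connected. -/
def KConnected (k : ℕ) (G : SimpleGraph V) : Prop :=
  k + 1 ≤ Fintype.card V ∧
    ∀ S : Finset V, S.card < k → (G.induce ((↑S : Set V)ᶜ)).Connected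

section Helpers
open Walk
variable {T : SimpleGraph V}


private lemma path_eq (hT : T.IsTree) {u v : V} {p q : T.Walk u v}
    (hp : p.IsPath) (hq : q.IsPath) : p = q := by
  have := hT.IsAcyclic.path_unique ⟨p, hp⟩ ⟨q, hq⟩
  exact congrArg Subtype.val this

private lemma exists_path (hT : T.IsTree) (u v : V) : ∃ r : T.Walk u v, r.IsPath := by
  obtain ⟨w⟩ := hT.isConnected u v
  exact ⟨w.bypass, w.bypass_isPath⟩

private lemma walk_path_length (hT : T.IsTree) {u v : V} {p : T.Walk u v}
    (hp : p.IsPath) : p.length = T.dist u v := by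
  obtain ⟨w, hw⟩ := Reachable.exists_walk_length_eq_dist ⟨p⟩
  have hb : w.bypass.IsPath := w.bypass_isPath
  have hpq : p = w.bypass := path_eq hT hp hb
  have h2 := w.length_bypass_le
  have h3 := dist_le w.bypass
  rw [hpq]
  omega

private lemma dist_split (hT : T.IsTree) {u v y : V} {p : T.Walk u v}
    (hp : p.IsPath) (hy : y ∈ p.support) :
    T.dist u y + T.dist y v = T.dist u v := by
  have h1 := walk_path_length hT (hp.takeUntil hy)
  have h2 := walk_path_length hT (hp.dropUntil hy)
  have h3 := walk_path_length hT hp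
  have h4 := congrArg Walk.length (p.take_spec hy)
  rw [length_append] at h4
  omega

private lemma isPath_append' {u v w : V} {p : T.Walk u v} {q : T.Walk v w}
    (hp : p.IsPath) (hq : q.IsPath) (h : ∀ y ∈ p.support, y ∈ q.support → y = v) :
    (p.append q).IsPath := by
  rw [Walk.isPath_def, Walk.support_append, List.nodup_append]
  refine ⟨hp.support_nodup, hq.support_nodup.tail, ?_⟩
  intro y hyp b hyt hyb
  subst hyb
  have hyq : y ∈ q.support := List.mem_of_mem_tail hyt
  have hy := h y hyp hyq
  subst hy
  have hnd := hq.support_nodup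
  rw [q.support_eq_cons] at hnd
  exact (List.nodup_cons.mp hnd).1 hyt

private lemma proj_unique_meet (hT : T.IsTree) {c d w π : V} {Q : T.Walk c d}
    (hmin : ∀ s ∈ Q.support, T.dist w π ≤ T.dist w s)
    {r : T.Walk w π} (hr : r.IsPath) :
    ∀ y ∈ r.support, y ∈ Q.support → y = π := by
  intro y hy hyQ
  have h1 := dist_split hT hr hy
  have h2 := hmin y hyQ
  have h0 : T.dist y π = 0 := by omega
  exact (hT.isConnected.dist_eq_zero_iff).mp h0

private lemma exists_seg {c d y z : V} {Q : T.Walk c d} (hQ : Q.IsPath)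
    (hy : y ∈ Q.support) (hz : z ∈ Q.support) :
    ∃ r : T.Walk y z, r.IsPath ∧ ∀ t ∈ r.support, t ∈ Q.support := by
  have hz' : z ∈ (Q.takeUntil y hy).support ∨ z ∈ (Q.dropUntil y hy).support := by
    rw [← Walk.mem_support_append_iff, Q.take_spec hy]; exact hz
  rcases hz' with h | h
  · refine ⟨((Q.takeUntil y hy).dropUntil z h).reverse, ((hQ.takeUntil hy).dropUntil h).reverse, ?_⟩
    intro t ht
    rw [Walk.support_reverse, List.mem_reverse] at ht
    exact Q.support_takeUntil_subset hy (((Q.takeUntil y hy)).support_dropUntil_subset h ht)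
  · refine ⟨(Q.dropUntil y hy).takeUntil z h, (hQ.dropUntil hy).takeUntil h, ?_⟩
    intro t ht
    exact Q.support_dropUntil_subset hy (((Q.dropUntil y hy)).support_takeUntil_subset h ht)

private lemma middle_mem (hT : T.IsTree) {y z w : V}
    (hmid : T.dist y w + T.dist w z = T.dist y z)
    {r : T.Walk y z} (hr : r.IsPath) : w ∈ r.support := by
  obtain ⟨g1, hg1⟩ := exists_path hT y w
  obtain ⟨g2, hg2⟩ := exists_path hT w z
  have hjunc : ∀ t ∈ g1.support, t ∈ g2.support → t = w := by
    intro t h1 h2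
    have e1 := dist_split hT hg1 h1
    have e2 := dist_split hT hg2 h2
    have tri := hT.isConnected.dist_triangle (u := y) (v := t) (w := z)
    have hcm : T.dist w t = T.dist t w := dist_comm ..
    have h0 : T.dist t w = 0 := by omega
    exact (hT.isConnected.dist_eq_zero_iff).mp h0
  have hpath := isPath_append' hg1 hg2 hjunc
  have heq : g1.append g2 = r := path_eq hT hpath hr
  rw [← heq, Walk.mem_support_append_iff]
  exact Or.inl g1.end_mem_support

private lemma support_between (hT : T.IsTree) {c d : V} {Q : T.Walk c d} (hQ : Q.IsPath)
    {y z : V} (hy : y ∈ Q.support) (hz : z ∈ Q.support) :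
    T.dist c y + T.dist y z = T.dist c z ∨ T.dist c z + T.dist z y = T.dist c y := by
  have hz' : z ∈ (Q.takeUntil y hy).support ∨ z ∈ (Q.dropUntil y hy).support := by
    rw [← Walk.mem_support_append_iff, Q.take_spec hy]; exact hz
  rcases hz' with h | h
  · right; exact dist_split hT (hQ.takeUntil hy) h
  · left
    have e1 := dist_split hT hQ hy
    have e2 := dist_split hT (hQ.dropUntil hy) h
    have e3 := dist_split hT hQ hz
    omega

private lemma tri3 (hT : T.IsTree) {c d : V} {Q : T.Walk c d} (hQ : Q.IsPath)
    {p q r : V} (hp : p ∈ Q.support) (hq : q ∈ Q.support) (hr : r ∈ Q.support) :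
    T.dist p r = T.dist p q + T.dist q r ∨ T.dist q r = T.dist q p + T.dist p r ∨
      T.dist p q = T.dist p r + T.dist r q := by
  have h1 := support_between hT hQ hp hq
  have h2 := support_between hT hQ hp hr
  have h3 := support_between hT hQ hq hr
  have c1 : T.dist p q = T.dist q p := dist_comm ..
  have c2 : T.dist p r = T.dist r p := dist_comm ..
  have c3 : T.dist q r = T.dist r q := dist_comm ..
  rcases h1 with h1 | h1 <;> rcases h2 with h2 | h2 <;> rcases h3 with h3 | h3 <;> omega

private lemma eccW_le_eccW (hT : T.IsTree) {a b c d : V} (P : T.Walk a b)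
    (hP : IsLongestPath T P) (Q : T.Walk c d) (hQ : Q.IsPath) :
    eccW T P ≤ eccW T Q := by
  by_contra hcon
  push_neg at hcon
  set e := eccW T P with he
  have hne : Nonempty V := hT.isConnected.nonempty
  obtain ⟨u, -, hu⟩ := Finset.exists_mem_eq_sup Finset.univ Finset.univ_nonempty (walkDist T P)
  have hue : walkDist T P u = e := by rw [he]; exact hu.symm
  have hproj : ∀ w : V, ∃ π, π ∈ Q.support ∧ T.dist w π < e ∧
      ∀ s ∈ Q.support, T.dist w π ≤ T.dist w s := by
    intro w
    obtain ⟨π, hπF, hπ⟩ := Finset.exists_mem_eq_inf'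
      (⟨c, List.mem_toFinset.mpr Q.start_mem_support⟩ : Q.support.toFinset.Nonempty)
      (fun s => T.dist w s)
    have hπ' : walkDist T Q w = T.dist w π := hπ
    refine ⟨π, List.mem_toFinset.mp hπF, ?_, ?_⟩
    · have h1 : walkDist T Q w ≤ eccW T Q := Finset.le_sup (Finset.mem_univ w)
      omega
    · intro s hs
      have h1 : walkDist T Q w ≤ T.dist w s :=
        Finset.inf'_le (fun s => T.dist w s) (List.mem_toFinset.mpr hs)
      omega
  obtain ⟨x, hxF, hx⟩ := Finset.exists_mem_eq_inf'
    (⟨a, List.mem_toFinset.mpr P.start_mem_support⟩ : P.support.toFinset.Nonempty)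
    (fun s => T.dist u s)
  have hxP : x ∈ P.support := List.mem_toFinset.mp hxF
  have hx' : walkDist T P u = T.dist u x := hx
  have hux : T.dist u x = e := by omega
  have hxmin : ∀ s ∈ P.support, e ≤ T.dist u s := by
    intro s hs
    have h1 : walkDist T P u ≤ T.dist u s :=
      Finset.inf'_le (fun s => T.dist u s) (List.mem_toFinset.mpr hs)
    omega
  obtain ⟨Rux, hRux⟩ := exists_path hT u x
  have hRuxlen : Rux.length = e := by rw [walk_path_length hT hRux]; exact hux
  have hxmin' : ∀ s ∈ P.support, T.dist u x ≤ T.dist u s := by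
    intro s hs; have := hxmin s hs; omega
  have hRuxmeet : ∀ y ∈ Rux.support, y ∈ P.support → y = x :=
    proj_unique_meet hT hxmin' hRux
  have hRbpath : (Rux.append (P.dropUntil x hxP)).IsPath := by
    refine isPath_append' hRux (hP.1.dropUntil hxP) ?_
    intro y hy hy'
    exact hRuxmeet y hy (P.support_dropUntil_subset hxP hy')
  have hRapath : (Rux.append (P.takeUntil x hxP).reverse).IsPath := by
    refine isPath_append' hRux (hP.1.takeUntil hxP).reverse ?_
    intro y hy hy'
    rw [Walk.support_reverse, List.mem_reverse] at hy'
    exact hRuxmeet y hy (P.support_takeUntil_subset hxP hy')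
  have hPlen : P.length = T.dist a b := walk_path_length hT hP.1
  have hEsplit : T.dist a x + T.dist x b = T.dist a b := dist_split hT hP.1 hxP
  have hdroplen := walk_path_length hT (hP.1.dropUntil hxP)
  have htakelen := walk_path_length hT (hP.1.takeUntil hxP)
  have hgb : T.dist u b = e + T.dist x b := by
    have h := walk_path_length hT hRbpath
    rw [length_append] at h
    omega
  have hga : T.dist u a = e + T.dist a x := by
    have h := walk_path_length hT hRapath
    rw [length_append, Walk.length_reverse] at h
    have cm : T.dist x a = T.dist a x := dist_comm ..
    have hrev := walk_path_length hT (hP.1.takeUntil hxP).reverse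
    rw [Walk.length_reverse] at hrev
    omega
  have hF1a : e ≤ T.dist a x := by
    have h := hP.2 u b _ hRbpath
    rw [length_append] at h
    omega
  have hF1b : e ≤ T.dist x b := by
    have h := hP.2 u a _ hRapath
    rw [length_append, Walk.length_reverse] at h
    omega
  obtain ⟨pa, hpaQ, hpalt, hpamin⟩ := hproj a
  obtain ⟨pb, hpbQ, hpblt, hpbmin⟩ := hproj b
  obtain ⟨pu, hpuQ, hpult, hpumin⟩ := hproj u
  obtain ⟨Aa, hAa⟩ := exists_path hT a pa
  obtain ⟨Ab, hAb⟩ := exists_path hT b pb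
  obtain ⟨Au, hAu⟩ := exists_path hT u pu
  have hAameet := proj_unique_meet hT hpamin hAa
  have hAbmeet := proj_unique_meet hT hpbmin hAb
  have hAumeet := proj_unique_meet hT hpumin hAu
  rcases tri3 hT hQ hpaQ hpuQ hpbQ with hmid | hmid | hmid
  · -- pu is the middle projection : pu lies on P, contradiction with hxmin
    obtain ⟨seg, hseg, hsegS⟩ := exists_seg hQ hpaQ hpbQ
    have hpu_seg : pu ∈ seg.support := middle_mem hT hmid.symm hseg
    have hsegB : (seg.append Ab.reverse).IsPath := by
      refine isPath_append' hseg hAb.reverse ?_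
      intro y hy hy'
      rw [Walk.support_reverse, List.mem_reverse] at hy'
      exact hAbmeet y hy' (hsegS y hy)
    have hW : (Aa.append (seg.append Ab.reverse)).IsPath := by
      refine isPath_append' hAa hsegB ?_
      intro y hy hy'
      rw [Walk.mem_support_append_iff] at hy'
      rcases hy' with hy' | hy'
      · exact hAameet y hy (hsegS y hy')
      · rw [Walk.support_reverse, List.mem_reverse] at hy'
        exfalso
        have d1 := dist_split hT hAa hy
        have d2 := dist_split hT hAb hy'
        have tri := hT.isConnected.dist_triangle (u := a) (v := y) (w := b)
        have cm : T.dist y b = T.dist b y := dist_comm ..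
        omega
    have hWP : Aa.append (seg.append Ab.reverse) = P := path_eq hT hW hP.1
    have hpuP : pu ∈ P.support := by
      rw [← hWP, Walk.mem_support_append_iff]
      right
      rw [Walk.mem_support_append_iff]
      left
      exact hpu_seg
    have := hxmin pu hpuP
    omega
  · -- pa is the middle projection
    obtain ⟨seg, hseg, hsegS⟩ := exists_seg hQ hpuQ hpbQ
    have hpa_seg : pa ∈ seg.support := by
      refine middle_mem hT ?_ hseg
      have c1 : T.dist pu pa = T.dist pa pu := dist_comm ..
      omega
    have hsegB : (seg.append Ab.reverse).IsPath := by
      refine isPath_append' hseg hAb.reverse ?_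
      intro y hy hy'
      rw [Walk.support_reverse, List.mem_reverse] at hy'
      exact hAbmeet y hy' (hsegS y hy)
    have hW : (Au.append (seg.append Ab.reverse)).IsPath := by
      refine isPath_append' hAu hsegB ?_
      intro y hy hy'
      rw [Walk.mem_support_append_iff] at hy'
      rcases hy' with hy' | hy'
      · exact hAumeet y hy (hsegS y hy')
      · rw [Walk.support_reverse, List.mem_reverse] at hy'
        exfalso
        have d1 := dist_split hT hAu hy
        have d2 := dist_split hT hAb hy'
        have tri := hT.isConnected.dist_triangle (u := u) (v := y) (w := b)
        have cm : T.dist y b = T.dist b y := dist_comm ..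
        omega
    have hWeq : Au.append (seg.append Ab.reverse) = Rux.append (P.dropUntil x hxP) :=
      path_eq hT hW hRbpath
    have hpaW : pa ∈ (Rux.append (P.dropUntil x hxP)).support := by
      rw [← hWeq, Walk.mem_support_append_iff]
      right
      rw [Walk.mem_support_append_iff]
      left
      exact hpa_seg
    rw [Walk.mem_support_append_iff] at hpaW
    rcases hpaW with h | h
    · have d1 := dist_split hT hRux h
      have tri := hT.isConnected.dist_triangle (u := u) (v := pa) (w := a)
      have cm : T.dist pa a = T.dist a pa := dist_comm ..
      omega
    · have hpaP : pa ∈ P.support := P.support_dropUntil_subset hxP h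
      have d1 := dist_split hT (hP.1.dropUntil hxP) h
      have d2 := dist_split hT hP.1 hpaP
      omega
  · -- pb is the middle projection
    obtain ⟨seg, hseg, hsegS⟩ := exists_seg hQ hpuQ hpaQ
    have hpb_seg : pb ∈ seg.support := by
      refine middle_mem hT ?_ hseg
      have c1 : T.dist pa pu = T.dist pu pa := dist_comm ..
      have c2 : T.dist pa pb = T.dist pb pa := dist_comm ..
      have c3 : T.dist pb pu = T.dist pu pb := dist_comm ..
      omega
    have hsegA : (seg.append Aa.reverse).IsPath := by
      refine isPath_append' hseg hAa.reverse ?_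
      intro y hy hy'
      rw [Walk.support_reverse, List.mem_reverse] at hy'
      exact hAameet y hy' (hsegS y hy)
    have hW : (Au.append (seg.append Aa.reverse)).IsPath := by
      refine isPath_append' hAu hsegA ?_
      intro y hy hy'
      rw [Walk.mem_support_append_iff] at hy'
      rcases hy' with hy' | hy'
      · exact hAumeet y hy (hsegS y hy')
      · rw [Walk.support_reverse, List.mem_reverse] at hy'
        exfalso
        have d1 := dist_split hT hAu hy
        have d2 := dist_split hT hAa hy'
        have tri := hT.isConnected.dist_triangle (u := u) (v := y) (w := a)
        have cm : T.dist y a = T.dist a y := dist_comm ..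
        omega
    have hWeq : Au.append (seg.append Aa.reverse) = Rux.append (P.takeUntil x hxP).reverse :=
      path_eq hT hW hRapath
    have hpbW : pb ∈ (Rux.append (P.takeUntil x hxP).reverse).support := by
      rw [← hWeq, Walk.mem_support_append_iff]
      right
      rw [Walk.mem_support_append_iff]
      left
      exact hpb_seg
    rw [Walk.mem_support_append_iff] at hpbW
    rcases hpbW with h | h
    · have d1 := dist_split hT hRux h
      have tri := hT.isConnected.dist_triangle (u := u) (v := pb) (w := b)
      have cm : T.dist pb b = T.dist b pb := dist_comm ..
      omega
    · rw [Walk.support_reverse, List.mem_reverse] at h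
      have hpbP : pb ∈ P.support := P.support_takeUntil_subset hxP h
      have d1 := dist_split hT (hP.1.takeUntil hxP) h
      have d2 := dist_split hT hP.1 hpbP
      have cm : T.dist pb b = T.dist b pb := dist_comm ..
      omega

end Helpers

theorem stmt12 (T : SimpleGraph V) (hT : T.IsTree)
    {a b : V} (P : T.Walk a b) (hP : IsLongestPath T P) :
    eccW T P = pe T := by
  have hmem : eccW T P ∈ {m | ∃ (a b : V) (P' : T.Walk a b), P'.IsPath ∧ eccW T P' = m} :=
    ⟨a, b, P, hP.1, rfl⟩
  apply le_antisymm
  · apply le_csInf ⟨_, hmem⟩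
    rintro m ⟨c, d, Q, hQ, rfl⟩
    exact eccW_le_eccW hT P hP Q hQ
  · exact Nat.sInf_le hmem
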